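/- Let G be a locally compact topological group acting by continuous linear maps on a barrelled locally convex K-vector space V. Then the action map G × V → V is continuous if and only if it is separately continuous. -/

import Mathlib

open Filter Topology Pointwise

/-- An `𝒪_K`-lattice in a `K`-vector space. -/
def IsLatticeSet (K : Type*) [NormedField K] {V : Type*} [AddCommGroup V] [Module K V]
    (L : Set V) : Prop :=
  (0 : V) ∈ L ∧ (∀ x ∈ L, ∀ y ∈ L, x + y ∈ L) ∧
    (∀ c : K, ‖c‖ ≤ 1 → ∀ x ∈ L, c • x ∈ L) ∧ ∀ v : V, ∃ c : K, v ∈ c • L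

/-- The closure of a lattice is a lattice. -/
lemma IsLatticeSet.closure' {K : Type*} [NontriviallyNormedField K] {V : Type*} [AddCommGroup V]
    [Module K V] [TopologicalSpace V] [IsTopologicalAddGroup V] [ContinuousSMul K V]
    {L : Set V} (hL : IsLatticeSet K L) : IsLatticeSet K (closure L) := by
  obtain ⟨h0, hadd, hsmul, habs⟩ := hL
  refine ⟨subset_closure h0, ?_, ?_, fun v => (habs v).imp fun c hc =>
    Set.smul_set_mono subset_closure hc⟩
  · intro x hx y hy
    exact map_mem_closure₂ continuous_add hx hy hadd
  · intro c hc x hx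
    exact map_mem_closure (continuous_const_smul c) hx (hsmul c hc)

/-- A compact set is absorbed by every neighborhood of zero. -/
lemma compact_absorbed {K : Type*} [NontriviallyNormedField K] {V : Type*} [AddCommGroup V]
    [Module K V] [TopologicalSpace V] [ContinuousSMul K V]
    {S : Set V} (hS : IsCompact S) {M : Set V} (hM : M ∈ 𝓝 (0 : V)) :
    ∃ c : K, c ≠ 0 ∧ ∀ x ∈ S, c • x ∈ M := by
  classical
  have key : ∀ x : V, ∃ ε : ℝ, 0 < ε ∧ ∃ W ∈ 𝓝 x, ∀ c : K, ‖c‖ < ε → ∀ y ∈ W, c • y ∈ M := by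
    intro x
    have h1 : (fun p : K × V => p.1 • p.2) ⁻¹' M ∈ 𝓝 ((0 : K), x) :=
      continuous_smul.continuousAt.preimage_mem_nhds (by simpa using hM)
    rw [mem_nhds_prod_iff] at h1
    obtain ⟨t, ht, w, hw, hsub⟩ := h1
    obtain ⟨ε, hε, hball⟩ := Metric.mem_nhds_iff.mp ht
    refine ⟨ε, hε, w, hw, fun c hc y hy => ?_⟩
    have h2 : ((c, y) : K × V) ∈ (fun p : K × V => p.1 • p.2) ⁻¹' M :=
      hsub (Set.mem_prod.mpr ⟨hball (mem_ball_zero_iff.mpr hc), hy⟩)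
    simpa using h2
  choose ε hε W hW using key
  obtain ⟨s, hs⟩ := hS.elim_nhds_subcover W (fun x _ => (hW x).1)
  set t : Finset ℝ := insert (1 : ℝ) (s.image ε) with ht
  have htne : t.Nonempty := ⟨1, Finset.mem_insert_self _ _⟩
  set δ : ℝ := t.min' htne with hδdef
  have hδ0 : 0 < δ := by
    have : δ ∈ t := t.min'_mem htne
    rw [ht] at this
    rcases Finset.mem_insert.mp this with h | h
    · rw [h]; norm_num
    · obtain ⟨x, _, hx⟩ := Finset.mem_image.mp h
      rw [← hx]; exact hε x
  obtain ⟨c, hc0, hcδ⟩ := NormedField.exists_norm_lt K hδ0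
  refine ⟨c, fun h => by simp [h] at hc0, fun x hx => ?_⟩
  obtain ⟨x₀, hx₀s, hx₀⟩ := Set.mem_iUnion₂.mp (hs.2 hx)
  have hδle : δ ≤ ε x₀ :=
    t.min'_le _ (Finset.mem_insert_of_mem (Finset.mem_image_of_mem ε hx₀s))
  exact (hW x₀).2 c (lt_of_lt_of_le hcδ hδle) x hx₀

/-- Equicontinuity on compact sets, via Banach–Steinhaus for barrelled spaces. -/
lemma equicont_aux {K V G : Type*} [NontriviallyNormedField K]
    [AddCommGroup V] [Module K V] [TopologicalSpace V] [IsTopologicalAddGroup V]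
    [ContinuousSMul K V] [Group G] [TopologicalSpace G]
    (hlc : ∀ U ∈ 𝓝 (0 : V), ∃ L, IsLatticeSet K L ∧ L ∈ 𝓝 (0 : V) ∧ L ⊆ U)
    (hbarrelled : ∀ L : Set V, IsLatticeSet K L → IsClosed L → IsOpen L)
    (ρ : G →* (V →ₗ[K] V)) (hcts : ∀ g : G, Continuous (ρ g))
    (hG : ∀ v : V, Continuous fun g : G => ρ g v)
    {C : Set G} (hC : IsCompact C) {U : Set V} (hU : U ∈ 𝓝 (0 : V)) :
    ∃ B ∈ 𝓝 (0 : V), ∀ g ∈ C, ∀ v ∈ B, ρ g v ∈ U := by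
  obtain ⟨U', hU'mem, hU'closed, hU'sub⟩ := exists_mem_nhds_isClosed_subset hU
  obtain ⟨L, hLlat, hLmem, hLsub⟩ := hlc U' hU'mem
  set M : Set V := closure L with hM
  have hMlat : IsLatticeSet K M := hLlat.closure'
  have hMclosed : IsClosed M := isClosed_closure
  have hMmem : M ∈ 𝓝 (0 : V) := mem_of_superset hLmem subset_closure
  have hMsub : M ⊆ U := (closure_minimal hLsub hU'closed).trans hU'sub
  set B : Set V := {v | ∀ g ∈ C, ρ g v ∈ M} with hB
  have hBclosed : IsClosed B := by
    have : B = ⋂ g ∈ C, (ρ g) ⁻¹' M := by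
      ext v; simp [hB]
    rw [this]
    exact isClosed_biInter fun g _ => hMclosed.preimage (hcts g)
  have hBlat : IsLatticeSet K B := by
    obtain ⟨h0, hadd, hsmul, _⟩ := hMlat
    refine ⟨fun g _ => by simpa using h0, ?_, ?_, ?_⟩
    · intro x hx y hy g hg
      rw [map_add]
      exact hadd _ (hx g hg) _ (hy g hg)
    · intro c hc x hx g hg
      rw [map_smul]
      exact hsmul c hc _ (hx g hg)
    · intro v
      have hS : IsCompact ((fun g => ρ g v) '' C) := hC.image (hG v)
      obtain ⟨c, hc0, hcM⟩ := compact_absorbed (K := K) hS hMmem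
      refine ⟨c⁻¹, (Set.mem_smul_set_iff_inv_smul_mem₀ (inv_ne_zero hc0) _ _).mpr ?_⟩
      rw [inv_inv]
      intro g hg
      rw [map_smul]
      exact hcM _ ⟨g, hg, rfl⟩
  have hBopen : IsOpen B := hbarrelled B hBlat hBclosed
  exact ⟨B, hBopen.mem_nhds hBlat.1, fun g hg v hv => hMsub (hv g hg)⟩

/-- A locally compact topological group acting by continuous linear maps on a barrelled
locally convex `K`-vector space: the action `G × V → V` is continuous iff it is separately
continuous. -/
theorem stmt2 {K V G : Type*} [NontriviallyNormedField K] [CompleteSpace K] [IsUltrametricDist K]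
    [AddCommGroup V] [Module K V] [TopologicalSpace V] [IsTopologicalAddGroup V]
    [ContinuousSMul K V]
    [Group G] [TopologicalSpace G] [IsTopologicalGroup G] [LocallyCompactSpace G]
    (hlc : ∀ U ∈ 𝓝 (0 : V), ∃ L, IsLatticeSet K L ∧ L ∈ 𝓝 (0 : V) ∧ L ⊆ U)
    (hbarrelled : ∀ L : Set V, IsLatticeSet K L → IsClosed L → IsOpen L)
    (ρ : G →* (V →ₗ[K] V)) (hcts : ∀ g : G, Continuous (ρ g)) :
    Continuous (fun p : G × V => ρ p.1 p.2) ↔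
      ((∀ g : G, Continuous fun v : V => ρ g v) ∧ ∀ v : V, Continuous fun g : G => ρ g v) := by
  constructor
  · intro h
    exact ⟨fun g => h.comp (continuous_const.prodMk continuous_id),
           fun v => h.comp (continuous_id.prodMk continuous_const)⟩
  · rintro ⟨_, hG⟩
    rw [continuous_iff_continuousAt]
    rintro ⟨g₀, v₀⟩
    have key : Filter.Tendsto (fun p : G × V => ρ p.1 (p.2 - v₀)) (𝓝 (g₀, v₀)) (𝓝 0) := by
      rw [Filter.tendsto_def]
      intro U hU
      obtain ⟨C, hCcomp, hCmem⟩ := exists_compact_mem_nhds g₀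
      obtain ⟨B, hBmem, hBprop⟩ := equicont_aux hlc hbarrelled ρ hcts hG hCcomp hU
      have h1 : (fun v : V => v - v₀) ⁻¹' B ∈ 𝓝 v₀ := by
        have hc : Continuous fun v : V => v - v₀ := continuous_id.sub continuous_const
        exact hc.continuousAt.preimage_mem_nhds (by simpa using hBmem)
      filter_upwards [prod_mem_nhds hCmem h1] with p hp
      exact hBprop p.1 hp.1 _ hp.2
    have h2 : Filter.Tendsto (fun p : G × V => ρ p.1 v₀) (𝓝 (g₀, v₀)) (𝓝 (ρ g₀ v₀)) :=
      ((hG v₀).continuousAt).comp continuousAt_fst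
    have hsum := key.add h2
    rw [zero_add] at hsum
    have heq : (fun p : G × V => ρ p.1 p.2)
        = fun p : G × V => ρ p.1 (p.2 - v₀) + ρ p.1 v₀ := by
      funext p
      rw [← map_add]
      congr 1
      abel
    rw [ContinuousAt, heq]
    exact hsum
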